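/- Let G be an extremal uniformly 3-connected graph on n = 3k + ℓ ≥ 5 vertices, for some integer k ≥ 2 and ℓ ∈ {−1, 0, 1}, constructed from complete graphs on four vertices using j bridge operations, t edge joins, p primary spoke operations and s secondary spoke operations. Then: (1) p = k − 1; (2) if ℓ = −1 then j = k−2 and t = s = 0; (3) if ℓ = 0 then j = k−2, t = 0 and s = 1; (4) if ℓ = 1 then either j = k−1 and t = s = 0, or j = k−2, t = 1 and s = 0, or j = k−2, t = 0 and s = 2. -/
import Mathlib


open SimpleGraph

/-- The degree of a vertex, as the cardinality of its neighbor set. -/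
noncomputable def vdeg {V : Type*} (G : SimpleGraph V) (v : V) : ℕ :=
  (G.neighborSet v).ncard

/-- The minimum degree of a graph. -/
noncomputable def minDeg {V : Type*} (G : SimpleGraph V) : ℕ :=
  sInf (Set.range (vdeg G))

/-- `ν(G)`: the number of vertices of minimum degree. -/
noncomputable def nu {V : Type*} (G : SimpleGraph V) : ℕ :=
  {v | vdeg G v = minDeg G}.ncard

/-- A family of `m` pairwise independent (i.e. internally vertex-disjoint, pairwise distinct)
paths from `u` to `v`. -/
def IsIndepPathFamily {V : Type*} (G : SimpleGraph V) {u v : V} {m : ℕ}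
    (W : Fin m → G.Walk u v) : Prop :=
  (∀ i, (W i).IsPath) ∧ Function.Injective W ∧
    ∀ i j, i ≠ j → ∀ x, x ∈ (W i).support → x ∈ (W j).support → x = u ∨ x = v

/-- A graph on at least `k+1` vertices is uniformly `k`-connected if each pair of its vertices
is connected by `k` and not more than `k` independent paths. -/
def UniformlyConnected (k : ℕ) {V : Type*} [Fintype V] (G : SimpleGraph V) : Prop :=
  k + 1 ≤ Fintype.card V ∧
    ∀ u v : V, u ≠ v →
      (∃ W : Fin k → G.Walk u v, IsIndepPathFamily G W) ∧
      ∀ m : ℕ, (∃ W : Fin m → G.Walk u v, IsIndepPathFamily G W) → m ≤ k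

/-- `k`-connected: more than `k` vertices, and still connected after deleting any fewer
than `k` vertices. -/
def KConnected (k : ℕ) {V : Type*} [Fintype V] (G : SimpleGraph V) : Prop :=
  k < Fintype.card V ∧
    ∀ S : Finset V, S.card < k → (G.induce {v : V | v ∉ S}).Connected
/-- A uniformly 3-connected graph `G` on `n` vertices is extremal if `ν(G) = ⌈(2n+2)/3⌉`. -/
def ExtremalU3 {V : Type*} [Fintype V] (G : SimpleGraph V) : Prop :=
  UniformlyConnected 3 G ∧
    (nu G : ℤ) = ⌈(2 * (Fintype.card V : ℚ) + 2) / 3⌉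
/-- A finite simple graph, bundled with its vertex type. -/
structure FinGraph where
  V : Type
  [instFintype : Fintype V]
  graph : SimpleGraph V

attribute [instance] FinGraph.instFintype
/-- Hypothesis of the bridge operation: `v` has exactly the three distinct
neighbors `x`, `y`, `z` (so `v` has degree 3 and neighborhood `{x, y, z}`). -/
def BridgeHyp {V : Type*} (G : SimpleGraph V) (v x y z : V) : Prop :=
  x ≠ y ∧ x ≠ z ∧ y ≠ z ∧ G.neighborSet v = {x, y, z}

/-- The bridge operation: `(G1 − v1) ∪ (G2 − v2) + x1x2 + y1y2 + z1z2`. -/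
def BridgeGraph {V1 V2 : Type*} (G1 : SimpleGraph V1) (G2 : SimpleGraph V2)
    (v1 x1 y1 z1 : V1) (v2 x2 y2 z2 : V2) :
    SimpleGraph ({a : V1 // a ≠ v1} ⊕ {b : V2 // b ≠ v2}) :=
  SimpleGraph.fromRel (fun p q =>
    match p, q with
    | Sum.inl a, Sum.inl a' => G1.Adj a.1 a'.1
    | Sum.inr b, Sum.inr b' => G2.Adj b.1 b'.1
    | Sum.inl a, Sum.inr b =>
        (a.1 = x1 ∧ b.1 = x2) ∨ (a.1 = y1 ∧ b.1 = y2) ∨ (a.1 = z1 ∧ b.1 = z2)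
    | Sum.inr _, Sum.inl _ => False)
/-- Hypotheses of the spoke operation: `v`, `w`, `x` are distinct, `vw` is an edge,
and every vertex other than possibly `x` has degree 3. -/
def SpokeHyp {V : Type*} (G : SimpleGraph V) (v w x : V) : Prop :=
  v ≠ w ∧ v ≠ x ∧ w ≠ x ∧ G.Adj v w ∧ ∀ z : V, z ≠ x → vdeg G z = 3

/-- The spoke operation: `G + y − vw + vy + wy + xy`, where the new vertex `y`
is `Sum.inr ()`. -/
def SpokeGraph {V : Type*} (G : SimpleGraph V) (v w x : V) : SimpleGraph (V ⊕ Unit) :=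
  SimpleGraph.fromRel (fun p q =>
    match p, q with
    | Sum.inl a, Sum.inl b => G.Adj a b ∧ ¬(a = v ∧ b = w) ∧ ¬(a = w ∧ b = v)
    | Sum.inl a, Sum.inr _ => a = v ∨ a = w ∨ a = x
    | Sum.inr _, _ => False)
/-- The edge join of the edges `ab` and `cd`:
`G + x + y − ab − cd + ax + xb + cy + yd + xy`, where the new vertices `x` and `y`
are `Sum.inr false` and `Sum.inr true`. -/
def EdgeJoinGraph {V : Type*} (G : SimpleGraph V) (a b c d : V) : SimpleGraph (V ⊕ Bool) :=
  SimpleGraph.fromRel (fun p q =>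
    match p, q with
    | Sum.inl u, Sum.inl u' => G.Adj u u' ∧ ¬(u = a ∧ u' = b) ∧ ¬(u = b ∧ u' = a) ∧
        ¬(u = c ∧ u' = d) ∧ ¬(u = d ∧ u' = c)
    | Sum.inl u, Sum.inr false => u = a ∨ u = b
    | Sum.inl u, Sum.inr true => u = c ∨ u = d
    | Sum.inr i, Sum.inr i' => i ≠ i'
    | Sum.inr _, Sum.inl _ => False)
/-- `H` is (up to isomorphism) the result of applying the bridge operation to `G1`, `G2`. -/
def IsBridgeOf (H G1 G2 : FinGraph) : Prop :=
  ∃ (v1 x1 y1 z1 : G1.V) (v2 x2 y2 z2 : G2.V),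
    BridgeHyp G1.graph v1 x1 y1 z1 ∧ BridgeHyp G2.graph v2 x2 y2 z2 ∧
    Nonempty (H.graph ≃g BridgeGraph G1.graph G2.graph v1 x1 y1 z1 v2 x2 y2 z2)
/-- `H` is the result of a primary spoke operation on `G'` (here `deg x = 3`). -/
def IsPrimarySpokeOf (H G' : FinGraph) : Prop :=
  ∃ v w x : G'.V, SpokeHyp G'.graph v w x ∧ vdeg G'.graph x = 3 ∧
    Nonempty (H.graph ≃g SpokeGraph G'.graph v w x)

/-- `H` is the result of a secondary spoke operation on `G'` (here `deg x > 3`). -/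
def IsSecondarySpokeOf (H G' : FinGraph) : Prop :=
  ∃ v w x : G'.V, SpokeHyp G'.graph v w x ∧ 3 < vdeg G'.graph x ∧
    Nonempty (H.graph ≃g SpokeGraph G'.graph v w x)
/-- `H` is the result of an edge join of two distinct edges of the 3-regular
3-connected graph `G'`. -/
def IsEdgeJoinOf (H G' : FinGraph) : Prop :=
  (∀ z : G'.V, vdeg G'.graph z = 3) ∧ KConnected 3 G'.graph ∧
  ∃ a b c d : G'.V, G'.graph.Adj a b ∧ G'.graph.Adj c d ∧ s(a, b) ≠ s(c, d) ∧
    Nonempty (H.graph ≃g EdgeJoinGraph G'.graph a b c d)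
/-- `Constructed G j t p s`: the graph `G` is constructed from complete graphs on four
vertices by a sequence of `j` bridge operations, `t` edge joins, `p` primary spoke
operations and `s` secondary spoke operations. -/
inductive Constructed : FinGraph → ℕ → ℕ → ℕ → ℕ → Prop
  | base (G : FinGraph) : Nonempty (G.graph ≃g (⊤ : SimpleGraph (Fin 4))) →
      Constructed G 0 0 0 0
  | bridge (G G1 G2 : FinGraph) (j1 t1 p1 s1 j2 t2 p2 s2 : ℕ) :
      Constructed G1 j1 t1 p1 s1 → Constructed G2 j2 t2 p2 s2 → IsBridgeOf G G1 G2 →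
      Constructed G (j1 + j2 + 1) (t1 + t2) (p1 + p2) (s1 + s2)
  | edgeJoin (G G' : FinGraph) (j t p s : ℕ) :
      Constructed G' j t p s → IsEdgeJoinOf G G' → Constructed G j (t + 1) p s
  | primarySpoke (G G' : FinGraph) (j t p s : ℕ) :
      Constructed G' j t p s → IsPrimarySpokeOf G G' → Constructed G j t (p + 1) s
  | secondarySpoke (G G' : FinGraph) (j t p s : ℕ) :
      Constructed G' j t p s → IsSecondarySpokeOf G G' → Constructed G j t p (s + 1)

set_option linter.unusedSectionVars false
set_option linter.unusedVariables false
set_option linter.unreachableTactic false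
set_option linter.unusedTactic false
set_option maxHeartbeats 1000000

lemma ncard_setOf_eq_natCard {A : Type*} (P : A → Prop) :
    {a | P a}.ncard = Nat.card {a // P a} := (Nat.card_coe_set_eq _).symm

lemma ncard_sum {A B : Type*} [Finite A] [Finite B] (P : A ⊕ B → Prop) :
    {z | P z}.ncard = {a | P (Sum.inl a)}.ncard + {b | P (Sum.inr b)}.ncard := by
  rw [ncard_setOf_eq_natCard, ncard_setOf_eq_natCard, ncard_setOf_eq_natCard,
    Nat.card_congr (Equiv.subtypeSum (p := P)), Nat.card_sum]

lemma ncard_subtype {A : Type*} [Fintype A] (v : A) (P : A → Prop) :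
    {a : {a : A // a ≠ v} | P a.1}.ncard = {a : A | a ≠ v ∧ P a}.ncard := by
  rw [ncard_setOf_eq_natCard, ncard_setOf_eq_natCard]
  exact Nat.card_congr ⟨fun x => ⟨x.1.1, x.1.2, x.2⟩, fun x => ⟨⟨x.1, x.2.1⟩, x.2.2⟩,
    fun x => rfl, fun x => rfl⟩

lemma disj_inl_inr {A B : Type*} (S : Set A) (T : Set B) :
    Disjoint (Sum.inl '' S : Set (A ⊕ B)) (Sum.inr '' T) := by
  rw [Set.disjoint_left]; rintro q ⟨a, _, rfl⟩ ⟨b, _, h⟩; exact Sum.inl_ne_inr h.symm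

lemma sum_subtype_ne {A : Type*} [Fintype A] [DecidableEq A] (v : A) (f : A → ℕ) :
    (∑ a : {a : A // a ≠ v}, f a.1) + f v = ∑ a : A, f a := by
  classical
  rw [← Finset.sum_subtype (Finset.univ.erase v) (by simp) f]
  exact Finset.sum_erase_add _ _ (Finset.mem_univ v)

lemma card_subtype_ne {A : Type*} [Fintype A] [DecidableEq A] (v : A) :
    Fintype.card {a : A // a ≠ v} = Fintype.card A - 1 := by
  classical
  rw [Fintype.card_subtype]
  have : Finset.univ.filter (fun a : A => a ≠ v) = Finset.univ.erase v := by
    ext a; simp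
  rw [this, Finset.card_erase_of_mem (Finset.mem_univ v), Finset.card_univ]

lemma vdeg_eq_natCard {V : Type*} (G : SimpleGraph V) (v : V) :
    vdeg G v = Nat.card (G.neighborSet v) := (Nat.card_coe_set_eq _).symm

lemma vdeg_iso {V W : Type*} {G : SimpleGraph V} {H : SimpleGraph W} (e : G ≃g H) (v : V) :
    vdeg H (e v) = vdeg G v := by
  rw [vdeg_eq_natCard, vdeg_eq_natCard]
  exact Nat.card_congr (e.mapNeighborSet v).symm

lemma card_iso {A B : Type*} [Fintype A] [Fintype B] {G : SimpleGraph A} {H : SimpleGraph B}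
    (e : G ≃g H) : Fintype.card A = Fintype.card B := Fintype.card_congr e.toEquiv

lemma sum_vdeg_iso {A B : Type*} [Fintype A] [Fintype B] {G : SimpleGraph A}
    {H : SimpleGraph B} (e : G ≃g H) : ∑ w, vdeg H w = ∑ v, vdeg G v := by
  rw [← Equiv.sum_comp e.toEquiv (vdeg H)]
  exact Finset.sum_congr rfl fun v _ => vdeg_iso e v

lemma ncard_high_iso {A B : Type*} [Fintype A] [Fintype B] {G : SimpleGraph A}
    {H : SimpleGraph B} (e : G ≃g H) :
    {w | 3 < vdeg H w}.ncard = {v | 3 < vdeg G v}.ncard := by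
  rw [ncard_setOf_eq_natCard, ncard_setOf_eq_natCard]
  exact (Nat.card_congr (e.toEquiv.subtypeEquiv fun v => by rw [show vdeg H (e.toEquiv v) = vdeg G v from vdeg_iso e v])).symm

lemma forall_vdeg_iso {A B : Type*} [Fintype A] [Fintype B] {G : SimpleGraph A}
    {H : SimpleGraph B} (e : G ≃g H) (h : ∀ v, 3 ≤ vdeg G v) : ∀ w, 3 ≤ vdeg H w := by
  intro w
  have := vdeg_iso e (e.symm w)
  rw [RelIso.apply_symm_apply] at this
  rw [this]; exact h _

lemma vdeg_top_fin4 (v : Fin 4) : vdeg (⊤ : SimpleGraph (Fin 4)) v = 3 := by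
  have hset : (⊤ : SimpleGraph (Fin 4)).neighborSet v = {v}ᶜ := by
    ext w; simp [SimpleGraph.top_adj, ne_comm]
  rw [vdeg, hset]
  have := Set.ncard_add_ncard_compl ({v} : Set (Fin 4))
  rw [Set.ncard_singleton, Nat.card_eq_fintype_card, Fintype.card_fin] at this
  omega
section Spoke
variable {V : Type*} [Fintype V] {G : SimpleGraph V} {v w x : V}

lemma spoke_adj_inl_inl (a b : V) :
    (SpokeGraph G v w x).Adj (Sum.inl a) (Sum.inl b) ↔
      G.Adj a b ∧ ¬(a = v ∧ b = w) ∧ ¬(a = w ∧ b = v) := by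
  simp only [SpokeGraph, fromRel_adj, ne_eq, Sum.inl.injEq]
  constructor
  · rintro ⟨hne, h | h⟩
    · exact h
    · exact ⟨h.1.symm, fun hc => h.2.2 ⟨hc.2, hc.1⟩, fun hc => h.2.1 ⟨hc.2, hc.1⟩⟩
  · exact fun h => ⟨h.1.ne, Or.inl h⟩

lemma spoke_adj_inl_inr (a : V) (u : Unit) :
    (SpokeGraph G v w x).Adj (Sum.inl a) (Sum.inr u) ↔ a = v ∨ a = w ∨ a = x := by
  simp [SpokeGraph, fromRel_adj]

lemma spoke_nbr_inr (u : Unit) :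
    (SpokeGraph G v w x).neighborSet (Sum.inr u) =
      {Sum.inl v, Sum.inl w, Sum.inl x} := by
  ext q
  cases q with
  | inl b =>
    rw [mem_neighborSet, (SpokeGraph G v w x).adj_comm, spoke_adj_inl_inr]
    simp
  | inr u' => simp [SpokeGraph, fromRel_adj]

lemma vdeg_spoke_inr (h : SpokeHyp G v w x) (u : Unit) :
    vdeg (SpokeGraph G v w x) (Sum.inr u) = 3 := by
  rw [vdeg, spoke_nbr_inr]
  rw [Set.ncard_insert_of_notMem (by simp [h.1, h.2.1]),
    Set.ncard_pair (by simp [h.2.2.1])]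

lemma spoke_nbr_inl_v (h : SpokeHyp G v w x) :
    (SpokeGraph G v w x).neighborSet (Sum.inl v) =
      Sum.inl '' (G.neighborSet v \ {w}) ∪ {Sum.inr ()} := by
  ext q
  cases q with
  | inl b =>
    rw [mem_neighborSet, spoke_adj_inl_inl]
    have hvw := h.1
    simp only [Set.mem_union, Set.mem_image, Set.mem_diff, mem_neighborSet,
      Set.mem_singleton_iff, Sum.inl.injEq]
    constructor
    · rintro ⟨hab, h1, _⟩
      exact Or.inl ⟨b, ⟨hab, fun hb => h1 (by simp [hb])⟩, rfl⟩
    · rintro (⟨b', ⟨hb1, hb2⟩, hb3⟩ | hfalse)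
      · cases hb3
        exact ⟨hb1, fun hc => hb2 hc.2, fun hc => hvw hc.1⟩
      · exact absurd hfalse (by simp)
  | inr u =>
    rw [mem_neighborSet, spoke_adj_inl_inr]
    simp
lemma spoke_nbr_inl_w (h : SpokeHyp G v w x) :
    (SpokeGraph G v w x).neighborSet (Sum.inl w) =
      Sum.inl '' (G.neighborSet w \ {v}) ∪ {Sum.inr ()} := by
  ext q
  cases q with
  | inl b =>
    rw [mem_neighborSet, spoke_adj_inl_inl]
    have hvw := h.1
    simp only [Set.mem_union, Set.mem_image, Set.mem_diff, mem_neighborSet,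
      Set.mem_singleton_iff, Sum.inl.injEq]
    constructor
    · rintro ⟨hab, _, h2⟩
      exact Or.inl ⟨b, ⟨hab, fun hb => h2 (by simp [hb])⟩, rfl⟩
    · rintro (⟨b', ⟨hb1, hb2⟩, hb3⟩ | hfalse)
      · cases hb3
        exact ⟨hb1, fun hc => hvw hc.1.symm, fun hc => hb2 hc.2⟩
      · exact absurd hfalse (by simp)
  | inr u =>
    rw [mem_neighborSet, spoke_adj_inl_inr]
    simp
lemma spoke_nbr_inl_x (h : SpokeHyp G v w x) :
    (SpokeGraph G v w x).neighborSet (Sum.inl x) =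
      Sum.inl '' G.neighborSet x ∪ {Sum.inr ()} := by
  ext q
  cases q with
  | inl b =>
    rw [mem_neighborSet, spoke_adj_inl_inl]
    have h1 := h.2.1; have h2 := h.2.2.1
    simp only [Set.mem_union, Set.mem_image, mem_neighborSet,
      Set.mem_singleton_iff, Sum.inl.injEq]
    constructor
    · rintro ⟨hab, _, _⟩; exact Or.inl ⟨b, hab, rfl⟩
    · rintro (⟨b', hb1, hb3⟩ | hfalse)
      · cases hb3
        exact ⟨hb1, fun hc => h1 hc.1.symm, fun hc => h2 hc.1.symm⟩
      · exact absurd hfalse (by simp)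
  | inr u =>
    rw [mem_neighborSet, spoke_adj_inl_inr]
    simp
lemma spoke_nbr_inl_other (h : SpokeHyp G v w x) (a : V) (hav : a ≠ v) (haw : a ≠ w)
    (hax : a ≠ x) :
    (SpokeGraph G v w x).neighborSet (Sum.inl a) = Sum.inl '' G.neighborSet a := by
  ext q
  cases q with
  | inl b =>
    rw [mem_neighborSet, spoke_adj_inl_inl]
    simp only [Set.mem_image, mem_neighborSet, Sum.inl.injEq]
    constructor
    · rintro ⟨hab, _, _⟩; exact ⟨b, hab, rfl⟩
    · rintro ⟨b', hb1, hb3⟩; cases hb3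
      exact ⟨hb1, fun hc => hav hc.1, fun hc => haw hc.1⟩
  | inr u =>
    rw [mem_neighborSet, spoke_adj_inl_inr]
    simp [hav, haw, hax]

lemma vdeg_spoke_inl (h : SpokeHyp G v w x) (a : V) (hax : a ≠ x) :
    vdeg (SpokeGraph G v w x) (Sum.inl a) = vdeg G a := by
  by_cases hav : a = v
  · subst hav
    rw [vdeg, spoke_nbr_inl_v h]
    have : ({Sum.inr ()} : Set (V ⊕ Unit)) = Sum.inr '' {()} := by simp
    rw [this, Set.ncard_union_eq (disj_inl_inr _ _),
      Set.ncard_image_of_injective _ Sum.inl_injective,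
      Set.ncard_image_of_injective _ Sum.inr_injective, Set.ncard_singleton,
      Set.ncard_diff_singleton_add_one ((G.mem_neighborSet _ _).mpr h.2.2.2.1)]
    rfl
  · by_cases haw : a = w
    · subst haw
      rw [vdeg, spoke_nbr_inl_w h]
      have : ({Sum.inr ()} : Set (V ⊕ Unit)) = Sum.inr '' {()} := by simp
      rw [this, Set.ncard_union_eq (disj_inl_inr _ _),
        Set.ncard_image_of_injective _ Sum.inl_injective,
        Set.ncard_image_of_injective _ Sum.inr_injective, Set.ncard_singleton,
        Set.ncard_diff_singleton_add_one ((G.mem_neighborSet _ _).mpr h.2.2.2.1.symm)]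
      rfl
    · rw [vdeg, spoke_nbr_inl_other h a hav haw hax,
        Set.ncard_image_of_injective _ Sum.inl_injective]
      rfl

lemma vdeg_spoke_inl_x (h : SpokeHyp G v w x) :
    vdeg (SpokeGraph G v w x) (Sum.inl x) = vdeg G x + 1 := by
  rw [vdeg, spoke_nbr_inl_x h]
  have : ({Sum.inr ()} : Set (V ⊕ Unit)) = Sum.inr '' {()} := by simp
  rw [this, Set.ncard_union_eq (disj_inl_inr _ _),
    Set.ncard_image_of_injective _ Sum.inl_injective,
    Set.ncard_image_of_injective _ Sum.inr_injective, Set.ncard_singleton]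
  rfl
end Spoke

section Bridge
variable {V1 V2 : Type*} [Fintype V1] [Fintype V2] {G1 : SimpleGraph V1} {G2 : SimpleGraph V2}
  {v1 x1 y1 z1 : V1} {v2 x2 y2 z2 : V2}

lemma bridgeHyp_vdeg {V : Type*} [Fintype V] {G : SimpleGraph V} {v x y z : V}
    (h : BridgeHyp G v x y z) : vdeg G v = 3 := by
  rw [vdeg, h.2.2.2, Set.ncard_insert_of_notMem (by simp [h.1, h.2.1]),
    Set.ncard_pair h.2.2.1]

lemma bridgeHyp_adj {V : Type*} [Fintype V] {G : SimpleGraph V} {v x y z : V}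
    (h : BridgeHyp G v x y z) (a : V) : G.Adj v a ↔ a = x ∨ a = y ∨ a = z := by
  rw [← G.mem_neighborSet, h.2.2.2]; simp

local notation "B" => BridgeGraph G1 G2 v1 x1 y1 z1 v2 x2 y2 z2

lemma bridge_adj_inl_inl (a a' : {a : V1 // a ≠ v1}) :
    (B).Adj (Sum.inl a) (Sum.inl a') ↔ G1.Adj a.1 a'.1 := by
  simp only [BridgeGraph, fromRel_adj, ne_eq, Sum.inl.injEq]
  constructor
  · rintro ⟨hne, h | h⟩
    · exact h
    · exact h.symm
  · exact fun h => ⟨fun hc => h.ne (congrArg Subtype.val hc), Or.inl h⟩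

lemma bridge_adj_inr_inr (b b' : {b : V2 // b ≠ v2}) :
    (B).Adj (Sum.inr b) (Sum.inr b') ↔ G2.Adj b.1 b'.1 := by
  simp only [BridgeGraph, fromRel_adj, ne_eq, Sum.inr.injEq]
  constructor
  · rintro ⟨hne, h | h⟩
    · exact h
    · exact h.symm
  · exact fun h => ⟨fun hc => h.ne (congrArg Subtype.val hc), Or.inl h⟩

lemma bridge_adj_inl_inr (a : {a : V1 // a ≠ v1}) (b : {b : V2 // b ≠ v2}) :
    (B).Adj (Sum.inl a) (Sum.inr b) ↔
      (a.1 = x1 ∧ b.1 = x2) ∨ (a.1 = y1 ∧ b.1 = y2) ∨ (a.1 = z1 ∧ b.1 = z2) := by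
  simp only [BridgeGraph, fromRel_adj]
  constructor
  · rintro ⟨hne, h | h⟩
    · exact h
    · exact h.elim
  · exact fun h => ⟨Sum.inl_ne_inr, Or.inl h⟩

lemma bridge_nbr_inl (a : {a : V1 // a ≠ v1}) :
    (B).neighborSet (Sum.inl a) =
      Sum.inl '' {a' : {a : V1 // a ≠ v1} | G1.Adj a.1 a'.1} ∪
      Sum.inr '' {b : {b : V2 // b ≠ v2} |
        (a.1 = x1 ∧ b.1 = x2) ∨ (a.1 = y1 ∧ b.1 = y2) ∨ (a.1 = z1 ∧ b.1 = z2)} := by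
  ext q
  cases q with
  | inl a' =>
    rw [mem_neighborSet, bridge_adj_inl_inl]
    simp
  | inr b =>
    rw [mem_neighborSet, bridge_adj_inl_inr]
    simp

lemma bridge_nbr_inr (b : {b : V2 // b ≠ v2}) :
    (B).neighborSet (Sum.inr b) =
      Sum.inr '' {b' : {b : V2 // b ≠ v2} | G2.Adj b.1 b'.1} ∪
      Sum.inl '' {a : {a : V1 // a ≠ v1} |
        (a.1 = x1 ∧ b.1 = x2) ∨ (a.1 = y1 ∧ b.1 = y2) ∨ (a.1 = z1 ∧ b.1 = z2)} := by
  ext q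
  cases q with
  | inl a =>
    rw [mem_neighborSet, (B).adj_comm, bridge_adj_inl_inr]
    simp
  | inr b' =>
    rw [mem_neighborSet, bridge_adj_inr_inr]
    simp

lemma vdeg_bridge_inl (h1 : BridgeHyp G1 v1 x1 y1 z1) (h2 : BridgeHyp G2 v2 x2 y2 z2)
    (a : {a : V1 // a ≠ v1}) : vdeg (B) (Sum.inl a) = vdeg G1 a.1 := by
  rw [vdeg, bridge_nbr_inl, Set.ncard_union_eq ((disj_inl_inr _ _).symm).symm,
    Set.ncard_image_of_injective _ Sum.inl_injective,
    Set.ncard_image_of_injective _ Sum.inr_injective, ncard_subtype v1 (fun a' => G1.Adj a.1 a'),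
    ncard_subtype v2 (fun b => (a.1 = x1 ∧ b = x2) ∨ (a.1 = y1 ∧ b = y2) ∨ (a.1 = z1 ∧ b = z2))]
  have hx2 : x2 ≠ v2 := fun hc => G2.irrefl (hc ▸ ((bridgeHyp_adj h2 x2).mpr (Or.inl rfl)))
  have hy2 : y2 ≠ v2 := fun hc => G2.irrefl (hc ▸ ((bridgeHyp_adj h2 y2).mpr (Or.inr (Or.inl rfl))))
  have hz2 : z2 ≠ v2 := fun hc => G2.irrefl (hc ▸ ((bridgeHyp_adj h2 z2).mpr (Or.inr (Or.inr rfl))))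
  have hN : v1 ∈ G1.neighborSet a.1 ↔ (a.1 = x1 ∨ a.1 = y1 ∨ a.1 = z1) := by
    rw [G1.mem_neighborSet, G1.adj_comm]; exact bridgeHyp_adj h1 a.1
  have hset : {a' : V1 | a' ≠ v1 ∧ G1.Adj a.1 a'} = G1.neighborSet a.1 \ {v1} := by
    ext a'; simp [mem_neighborSet, and_comm]
  rw [hset]
  by_cases hax : a.1 = x1
  · have : {b : V2 | b ≠ v2 ∧ ((a.1 = x1 ∧ b = x2) ∨ (a.1 = y1 ∧ b = y2) ∨ (a.1 = z1 ∧ b = z2))}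
        = {x2} := by
      ext b
      simp only [Set.mem_setOf_eq, Set.mem_singleton_iff]
      constructor
      · rintro ⟨hb, ⟨_, rfl⟩ | ⟨hc, _⟩ | ⟨hc, _⟩⟩
        · rfl
        · exact absurd (hax ▸ hc : x1 = y1) h1.1
        · exact absurd (hax ▸ hc : x1 = z1) h1.2.1
      · rintro rfl; exact ⟨hx2, Or.inl ⟨hax, rfl⟩⟩
    rw [this, Set.ncard_singleton, Set.ncard_diff_singleton_add_one (hN.mpr (Or.inl hax))]
    rfl
  · by_cases hay : a.1 = y1
    · have : {b : V2 | b ≠ v2 ∧ ((a.1 = x1 ∧ b = x2) ∨ (a.1 = y1 ∧ b = y2) ∨ (a.1 = z1 ∧ b = z2))}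
          = {y2} := by
        ext b
        simp only [Set.mem_setOf_eq, Set.mem_singleton_iff]
        constructor
        · rintro ⟨hb, ⟨hc, _⟩ | ⟨_, rfl⟩ | ⟨hc, _⟩⟩
          · exact absurd (hay ▸ hc : y1 = x1) (Ne.symm h1.1)
          · rfl
          · exact absurd (hay ▸ hc : y1 = z1) h1.2.2.1
        · rintro rfl; exact ⟨hy2, Or.inr (Or.inl ⟨hay, rfl⟩)⟩
      rw [this, Set.ncard_singleton, Set.ncard_diff_singleton_add_one (hN.mpr (Or.inr (Or.inl hay)))]
      rfl
    · by_cases haz : a.1 = z1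
      · have : {b : V2 | b ≠ v2 ∧ ((a.1 = x1 ∧ b = x2) ∨ (a.1 = y1 ∧ b = y2) ∨ (a.1 = z1 ∧ b = z2))}
            = {z2} := by
          ext b
          simp only [Set.mem_setOf_eq, Set.mem_singleton_iff]
          constructor
          · rintro ⟨hb, ⟨hc, _⟩ | ⟨hc, _⟩ | ⟨_, rfl⟩⟩
            · exact absurd (haz ▸ hc : z1 = x1) (Ne.symm h1.2.1)
            · exact absurd (haz ▸ hc : z1 = y1) (Ne.symm h1.2.2.1)
            · rfl
          · rintro rfl; exact ⟨hz2, Or.inr (Or.inr ⟨haz, rfl⟩)⟩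
        rw [this, Set.ncard_singleton, Set.ncard_diff_singleton_add_one (hN.mpr (Or.inr (Or.inr haz)))]
        rfl
      · have he : {b : V2 | b ≠ v2 ∧ ((a.1 = x1 ∧ b = x2) ∨ (a.1 = y1 ∧ b = y2) ∨ (a.1 = z1 ∧ b = z2))}
            = ∅ := by
          ext b
          simp only [Set.mem_setOf_eq, Set.mem_empty_iff_false, iff_false, not_and, not_or]
          exact fun _ => ⟨fun hc => absurd hc hax, fun hc => absurd hc hay,
            fun hc => absurd hc haz⟩
        have hv : v1 ∉ G1.neighborSet a.1 := fun hc => by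
          rcases hN.mp hc with h | h | h
          exacts [hax h, hay h, haz h]
        rw [he, Set.ncard_empty, Set.diff_singleton_eq_self hv, add_zero]
        rfl
lemma vdeg_bridge_inr (h1 : BridgeHyp G1 v1 x1 y1 z1) (h2 : BridgeHyp G2 v2 x2 y2 z2)
    (b : {b : V2 // b ≠ v2}) : vdeg (B) (Sum.inr b) = vdeg G2 b.1 := by
  rw [vdeg, bridge_nbr_inr, Set.ncard_union_eq ((disj_inl_inr _ _).symm),
    Set.ncard_image_of_injective _ Sum.inr_injective,
    Set.ncard_image_of_injective _ Sum.inl_injective,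
    ncard_subtype v2 (fun b' => G2.Adj b.1 b'),
    ncard_subtype v1 (fun a => (a = x1 ∧ b.1 = x2) ∨ (a = y1 ∧ b.1 = y2) ∨ (a = z1 ∧ b.1 = z2))]
  have hx1 : x1 ≠ v1 := fun hc => G1.irrefl (hc ▸ ((bridgeHyp_adj h1 x1).mpr (Or.inl rfl)))
  have hy1 : y1 ≠ v1 := fun hc => G1.irrefl (hc ▸ ((bridgeHyp_adj h1 y1).mpr (Or.inr (Or.inl rfl))))
  have hz1 : z1 ≠ v1 := fun hc => G1.irrefl (hc ▸ ((bridgeHyp_adj h1 z1).mpr (Or.inr (Or.inr rfl))))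
  have hN : v2 ∈ G2.neighborSet b.1 ↔ (b.1 = x2 ∨ b.1 = y2 ∨ b.1 = z2) := by
    rw [G2.mem_neighborSet, G2.adj_comm]; exact bridgeHyp_adj h2 b.1
  have hset : {b' : V2 | b' ≠ v2 ∧ G2.Adj b.1 b'} = G2.neighborSet b.1 \ {v2} := by
    ext b'; simp [mem_neighborSet, and_comm]
  rw [hset]
  by_cases hbx : b.1 = x2
  · have : {a : V1 | a ≠ v1 ∧ ((a = x1 ∧ b.1 = x2) ∨ (a = y1 ∧ b.1 = y2) ∨ (a = z1 ∧ b.1 = z2))}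
        = {x1} := by
      ext a
      simp only [Set.mem_setOf_eq, Set.mem_singleton_iff]
      constructor
      · rintro ⟨ha, ⟨rfl, _⟩ | ⟨_, hc⟩ | ⟨_, hc⟩⟩
        · rfl
        · exact absurd (hbx ▸ hc : x2 = y2) h2.1
        · exact absurd (hbx ▸ hc : x2 = z2) h2.2.1
      · rintro rfl; exact ⟨hx1, Or.inl ⟨rfl, hbx⟩⟩
    rw [this, Set.ncard_singleton, Set.ncard_diff_singleton_add_one (hN.mpr (Or.inl hbx))]
    rfl
  · by_cases hby : b.1 = y2
    · have : {a : V1 | a ≠ v1 ∧ ((a = x1 ∧ b.1 = x2) ∨ (a = y1 ∧ b.1 = y2) ∨ (a = z1 ∧ b.1 = z2))}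
          = {y1} := by
        ext a
        simp only [Set.mem_setOf_eq, Set.mem_singleton_iff]
        constructor
        · rintro ⟨ha, ⟨_, hc⟩ | ⟨rfl, _⟩ | ⟨_, hc⟩⟩
          · exact absurd (hby ▸ hc : y2 = x2) (Ne.symm h2.1)
          · rfl
          · exact absurd (hby ▸ hc : y2 = z2) h2.2.2.1
        · rintro rfl; exact ⟨hy1, Or.inr (Or.inl ⟨rfl, hby⟩)⟩
      rw [this, Set.ncard_singleton, Set.ncard_diff_singleton_add_one (hN.mpr (Or.inr (Or.inl hby)))]
      rfl
    · by_cases hbz : b.1 = z2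
      · have : {a : V1 | a ≠ v1 ∧ ((a = x1 ∧ b.1 = x2) ∨ (a = y1 ∧ b.1 = y2) ∨ (a = z1 ∧ b.1 = z2))}
            = {z1} := by
          ext a
          simp only [Set.mem_setOf_eq, Set.mem_singleton_iff]
          constructor
          · rintro ⟨ha, ⟨_, hc⟩ | ⟨_, hc⟩ | ⟨rfl, _⟩⟩
            · exact absurd (hbz ▸ hc : z2 = x2) (Ne.symm h2.2.1)
            · exact absurd (hbz ▸ hc : z2 = y2) (Ne.symm h2.2.2.1)
            · rfl
          · rintro rfl; exact ⟨hz1, Or.inr (Or.inr ⟨rfl, hbz⟩)⟩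
        rw [this, Set.ncard_singleton, Set.ncard_diff_singleton_add_one (hN.mpr (Or.inr (Or.inr hbz)))]
        rfl
      · have he : {a : V1 | a ≠ v1 ∧ ((a = x1 ∧ b.1 = x2) ∨ (a = y1 ∧ b.1 = y2) ∨ (a = z1 ∧ b.1 = z2))}
            = ∅ := by
          ext a
          simp only [Set.mem_setOf_eq, Set.mem_empty_iff_false, iff_false, not_and, not_or]
          exact fun hc => ⟨fun _ hc2 => hbx hc2, fun _ hc2 => hby hc2, fun _ hc2 => hbz hc2⟩
        have hv : v2 ∉ G2.neighborSet b.1 := fun hc => by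
          rcases hN.mp hc with h | h | h
          exacts [hbx h, hby h, hbz h]
        rw [he, Set.ncard_empty, Set.diff_singleton_eq_self hv, add_zero]
        rfl

end Bridge

section EJ
variable {V : Type*} [Fintype V] {G : SimpleGraph V} {a b c d : V}

lemma ej_adj_inl_inl (u u' : V) :
    (EdgeJoinGraph G a b c d).Adj (Sum.inl u) (Sum.inl u') ↔
      G.Adj u u' ∧ ¬(u = a ∧ u' = b) ∧ ¬(u = b ∧ u' = a) ∧
        ¬(u = c ∧ u' = d) ∧ ¬(u = d ∧ u' = c) := by
  simp only [EdgeJoinGraph, fromRel_adj, ne_eq, Sum.inl.injEq]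
  constructor
  · rintro ⟨hne, h | h⟩
    · exact h
    · exact ⟨h.1.symm, fun hc => h.2.2.1 ⟨hc.2, hc.1⟩, fun hc => h.2.1 ⟨hc.2, hc.1⟩,
        fun hc => h.2.2.2.2 ⟨hc.2, hc.1⟩, fun hc => h.2.2.2.1 ⟨hc.2, hc.1⟩⟩
  · exact fun h => ⟨h.1.ne, Or.inl h⟩

lemma ej_adj_inl_inr (u : V) (i : Bool) :
    (EdgeJoinGraph G a b c d).Adj (Sum.inl u) (Sum.inr i) ↔
      (i = false ∧ (u = a ∨ u = b)) ∨ (i = true ∧ (u = c ∨ u = d)) := by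
  cases i <;> simp [EdgeJoinGraph, fromRel_adj]

lemma ej_adj_inr_inr (i i' : Bool) :
    (EdgeJoinGraph G a b c d).Adj (Sum.inr i) (Sum.inr i') ↔ i ≠ i' := by
  constructor
  · intro h; rcases (by simpa [EdgeJoinGraph, fromRel_adj] using h) with ⟨h1, _⟩
    exact fun hc => h1 (by rw [hc])
  · intro h
    have : (fun p q => match p, q with
      | Sum.inl u, Sum.inl u' => G.Adj u u' ∧ ¬(u = a ∧ u' = b) ∧ ¬(u = b ∧ u' = a) ∧
          ¬(u = c ∧ u' = d) ∧ ¬(u = d ∧ u' = c)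
      | Sum.inl u, Sum.inr false => u = a ∨ u = b
      | Sum.inl u, Sum.inr true => u = c ∨ u = d
      | Sum.inr i, Sum.inr i' => i ≠ i'
      | Sum.inr _, Sum.inl _ => False) (Sum.inr i) (Sum.inr i' : V ⊕ Bool) := h
    exact ⟨fun hc => h (Sum.inr.inj hc), Or.inl this⟩

lemma ej_nbr_inl (u : V) :
    (EdgeJoinGraph G a b c d).neighborSet (Sum.inl u) =
      Sum.inl '' (G.neighborSet u \
        {z | (u = a ∧ z = b) ∨ (u = b ∧ z = a) ∨ (u = c ∧ z = d) ∨ (u = d ∧ z = c)}) ∪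
      Sum.inr '' {i : Bool | (i = false ∧ (u = a ∨ u = b)) ∨ (i = true ∧ (u = c ∨ u = d))} := by
  ext q
  cases q with
  | inl z =>
    rw [mem_neighborSet, ej_adj_inl_inl]
    simp only [Set.mem_union, Set.mem_image, Set.mem_diff, mem_neighborSet,
      Set.mem_setOf_eq, Sum.inl.injEq, reduceCtorEq, exists_eq_right,
      and_false, exists_false, or_false]
    tauto
  | inr i =>
    rw [mem_neighborSet, ej_adj_inl_inr]
    simp only [Set.mem_union, Set.mem_image, Sum.inr.injEq, reduceCtorEq,
      exists_eq_right, Set.mem_setOf_eq, and_false, exists_false, false_or]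

lemma ej_nbr_inr_false :
    (EdgeJoinGraph G a b c d).neighborSet (Sum.inr false) =
      {Sum.inl a, Sum.inl b, Sum.inr true} := by
  ext q
  cases q with
  | inl z =>
    rw [mem_neighborSet, (EdgeJoinGraph G a b c d).adj_comm, ej_adj_inl_inr]
    simp
  | inr i =>
    rw [mem_neighborSet, ej_adj_inr_inr]
    cases i <;> simp

lemma ej_nbr_inr_true :
    (EdgeJoinGraph G a b c d).neighborSet (Sum.inr true) =
      {Sum.inl c, Sum.inl d, Sum.inr false} := by
  ext q
  cases q with
  | inl z =>
    rw [mem_neighborSet, (EdgeJoinGraph G a b c d).adj_comm, ej_adj_inl_inr]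
    simp
  | inr i =>
    rw [mem_neighborSet, ej_adj_inr_inr]
    cases i <;> simp

lemma vdeg_ej_inr (hab : G.Adj a b) (hcd : G.Adj c d) (i : Bool) :
    vdeg (EdgeJoinGraph G a b c d) (Sum.inr i) = 3 := by
  cases i
  · rw [vdeg, ej_nbr_inr_false,
      Set.ncard_insert_of_notMem (by simp [hab.ne]),
      Set.ncard_pair (by simp)]
  · rw [vdeg, ej_nbr_inr_true,
      Set.ncard_insert_of_notMem (by simp [hcd.ne]),
      Set.ncard_pair (by simp)]

lemma vdeg_ej_inl (hreg : ∀ z, vdeg G z = 3) (hab : G.Adj a b) (hcd : G.Adj c d)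
    (hne : s(a, b) ≠ s(c, d)) (u : V) :
    vdeg (EdgeJoinGraph G a b c d) (Sum.inl u) = 3 := by
  have hnab : a ≠ b := hab.ne
  have hncd : c ≠ d := hcd.ne
  have hs : ¬(a = c ∧ b = d) ∧ ¬(a = d ∧ b = c) := by
    constructor <;> rintro ⟨rfl, rfl⟩ <;> simp [Sym2.eq_iff] at hne <;> tauto
  set P : Set V := {z | (u = a ∧ z = b) ∨ (u = b ∧ z = a) ∨ (u = c ∧ z = d) ∨ (u = d ∧ z = c)}
    with hPdef
  set T : Set Bool := {i : Bool | (i = false ∧ (u = a ∨ u = b)) ∨ (i = true ∧ (u = c ∨ u = d))}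
    with hTdef
  have hPsub : P ⊆ G.neighborSet u := by
    rintro z (⟨rfl, rfl⟩ | ⟨rfl, rfl⟩ | ⟨rfl, rfl⟩ | ⟨rfl, rfl⟩)
    exacts [hab, hab.symm, hcd, hcd.symm]
  have hcard : P.ncard = T.ncard := by
    by_cases hua : u = a
    · subst hua
      have hf : ¬ u = b := hnab
      by_cases huc : u = c
      · have hud : ¬ u = d := fun hc => hncd (huc ▸ hc ▸ rfl)
        have hbd : b ≠ d := fun hc => hs.1 ⟨huc, hc⟩
        have : P = {b, d} := by
          ext z; simp only [hPdef, Set.mem_setOf_eq, Set.mem_insert_iff, Set.mem_singleton_iff]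
          tauto
        have hT : T = {false, true} := by
          ext i; simp only [hTdef, Set.mem_setOf_eq, Set.mem_insert_iff, Set.mem_singleton_iff]
          cases i <;> tauto
        rw [this, hT, Set.ncard_pair hbd, Set.ncard_pair (by simp)]
      · by_cases hud : u = d
        · have hbc : b ≠ c := fun hc => hs.2 ⟨hud, hc⟩
          have : P = {b, c} := by
            ext z; simp only [hPdef, Set.mem_setOf_eq, Set.mem_insert_iff, Set.mem_singleton_iff]
            tauto
          have hT : T = {false, true} := by
            ext i; simp only [hTdef, Set.mem_setOf_eq, Set.mem_insert_iff, Set.mem_singleton_iff]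
            cases i <;> tauto
          rw [this, hT, Set.ncard_pair hbc, Set.ncard_pair (by simp)]
        · have : P = {b} := by
            ext z; simp only [hPdef, Set.mem_setOf_eq, Set.mem_singleton_iff]
            tauto
          have hT : T = {false} := by
            ext i; simp only [hTdef, Set.mem_setOf_eq, Set.mem_singleton_iff]
            cases i <;> tauto
          rw [this, hT, Set.ncard_singleton, Set.ncard_singleton]
    · by_cases hub : u = b
      · subst hub
        by_cases huc : u = c
        · have hud : ¬ u = d := fun hc => hncd (huc ▸ hc ▸ rfl)
          have had : a ≠ d := fun hc => hs.2 ⟨hc, huc⟩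
          have : P = {a, d} := by
            ext z; simp only [hPdef, Set.mem_setOf_eq, Set.mem_insert_iff, Set.mem_singleton_iff]
            tauto
          have hT : T = {false, true} := by
            ext i; simp only [hTdef, Set.mem_setOf_eq, Set.mem_insert_iff, Set.mem_singleton_iff]
            cases i <;> tauto
          rw [this, hT, Set.ncard_pair had, Set.ncard_pair (by simp)]
        · by_cases hud : u = d
          · have hac : a ≠ c := fun hc => hs.1 ⟨hc, hud⟩
            have : P = {a, c} := by
              ext z; simp only [hPdef, Set.mem_setOf_eq, Set.mem_insert_iff, Set.mem_singleton_iff]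
              tauto
            have hT : T = {false, true} := by
              ext i; simp only [hTdef, Set.mem_setOf_eq, Set.mem_insert_iff, Set.mem_singleton_iff]
              cases i <;> tauto
            rw [this, hT, Set.ncard_pair hac, Set.ncard_pair (by simp)]
          · have : P = {a} := by
              ext z; simp only [hPdef, Set.mem_setOf_eq, Set.mem_singleton_iff]
              tauto
            have hT : T = {false} := by
              ext i; simp only [hTdef, Set.mem_setOf_eq, Set.mem_singleton_iff]
              cases i <;> tauto
            rw [this, hT, Set.ncard_singleton, Set.ncard_singleton]
      · by_cases huc : u = c
        · have hud : ¬ u = d := fun hc => hncd (huc ▸ hc ▸ rfl)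
          have : P = {d} := by
            ext z; simp only [hPdef, Set.mem_setOf_eq, Set.mem_singleton_iff]
            tauto
          have hT : T = {true} := by
            ext i; simp only [hTdef, Set.mem_setOf_eq, Set.mem_singleton_iff]
            cases i <;> tauto
          rw [this, hT, Set.ncard_singleton, Set.ncard_singleton]
        · by_cases hud : u = d
          · have : P = {c} := by
              ext z; simp only [hPdef, Set.mem_setOf_eq, Set.mem_singleton_iff]
              tauto
            have hT : T = {true} := by
              ext i; simp only [hTdef, Set.mem_setOf_eq, Set.mem_singleton_iff]
              cases i <;> tauto
            rw [this, hT, Set.ncard_singleton, Set.ncard_singleton]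
          · have : P = ∅ := by
              ext z; simp only [hPdef, Set.mem_setOf_eq, Set.mem_empty_iff_false, iff_false]
              tauto
            have hT : T = ∅ := by
              ext i; simp only [hTdef, Set.mem_setOf_eq, Set.mem_empty_iff_false, iff_false]
              cases i <;> tauto
            rw [this, hT, Set.ncard_empty, Set.ncard_empty]
  have hPle : P.ncard ≤ 3 := by
    have := Set.ncard_le_ncard hPsub (Set.toFinite _)
    rw [show (G.neighborSet u).ncard = 3 from hreg u] at this
    exact this
  have hdecomp : (EdgeJoinGraph G a b c d).neighborSet (Sum.inl u) =
      Sum.inl '' (G.neighborSet u \ P) ∪ Sum.inr '' T := ej_nbr_inl u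
  rw [vdeg, hdecomp, Set.ncard_union_eq (disj_inl_inr _ _),
    Set.ncard_image_of_injective _ Sum.inl_injective,
    Set.ncard_image_of_injective _ Sum.inr_injective,
    Set.ncard_diff hPsub, show (G.neighborSet u).ncard = 3 from hreg u, ← hcard]
  omega
end EJ

/-- The key invariant maintained by the construction. -/
def ConsInv (H : FinGraph) (j t p s : ℕ) : Prop :=
  Fintype.card H.V = 2*j + 4 + 2*t + p + s ∧
  (∀ v, 3 ≤ vdeg H.graph v) ∧
  {v | 3 < vdeg H.graph v}.ncard = p ∧
  (∑ v, vdeg H.graph v) = 3 * Fintype.card H.V + p + s ∧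
  p ≤ j + 1

lemma constructed_inv {H : FinGraph} {j t p s : ℕ} (hc : Constructed H j t p s) :
    ConsInv H j t p s := by
  induction hc with
  | base G he =>
    obtain ⟨e⟩ := he
    have hdeg : ∀ v : G.V, vdeg G.graph v = 3 := by
      intro v
      have h1 := vdeg_iso e v
      rw [vdeg_top_fin4] at h1
      exact h1.symm
    have hcard : Fintype.card G.V = 4 := by
      rw [card_iso e, Fintype.card_fin]
    refine ⟨by omega, fun v => (hdeg v).ge, ?_, ?_, by omega⟩
    · have : {v | 3 < vdeg G.graph v} = ∅ := by
        ext v; simp [hdeg v]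
      rw [this, Set.ncard_empty]
    · rw [Finset.sum_congr rfl (fun v _ => hdeg v), Finset.sum_const, Finset.card_univ,
        hcard, smul_eq_mul]
  | bridge G G1 G2 j1 t1 p1 s1 j2 t2 p2 s2 hc1 hc2 hB ih1 ih2 =>
    classical
    obtain ⟨hc1', hd1, hh1, hs1, hp1⟩ := ih1
    obtain ⟨hc2', hd2, hh2, hs2, hp2⟩ := ih2
    obtain ⟨v1, x1, y1, z1, v2, x2, y2, z2, h1, h2, ⟨e⟩⟩ := hB
    have hdB : ∀ q, 3 ≤ vdeg (BridgeGraph G1.graph G2.graph v1 x1 y1 z1 v2 x2 y2 z2) q := by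
      rintro (a | b)
      · rw [vdeg_bridge_inl h1 h2]; exact hd1 _
      · rw [vdeg_bridge_inr h1 h2]; exact hd2 _
    have hcard : Fintype.card G.V =
        Fintype.card {a : G1.V // a ≠ v1} + Fintype.card {b : G2.V // b ≠ v2} := by
      rw [card_iso e, Fintype.card_sum]
    rw [card_subtype_ne, card_subtype_ne] at hcard
    have hhigh : {v | 3 < vdeg G.graph v}.ncard = p1 + p2 := by
      rw [← ncard_high_iso e, ncard_sum]
      have e1 : {a : {a : G1.V // a ≠ v1} |
          3 < vdeg (BridgeGraph G1.graph G2.graph v1 x1 y1 z1 v2 x2 y2 z2) (Sum.inl a)} =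
          {a : {a : G1.V // a ≠ v1} | 3 < vdeg G1.graph a.1} := by
        ext a; rw [Set.mem_setOf_eq, Set.mem_setOf_eq, vdeg_bridge_inl h1 h2]
      have e2 : {b : {b : G2.V // b ≠ v2} |
          3 < vdeg (BridgeGraph G1.graph G2.graph v1 x1 y1 z1 v2 x2 y2 z2) (Sum.inr b)} =
          {b : {b : G2.V // b ≠ v2} | 3 < vdeg G2.graph b.1} := by
        ext b; rw [Set.mem_setOf_eq, Set.mem_setOf_eq, vdeg_bridge_inr h1 h2]
      rw [e1, e2, ncard_subtype v1 (fun a => 3 < vdeg G1.graph a),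
        ncard_subtype v2 (fun b => 3 < vdeg G2.graph b)]
      have e3 : {a : G1.V | a ≠ v1 ∧ 3 < vdeg G1.graph a} = {a : G1.V | 3 < vdeg G1.graph a} := by
        ext a
        simp only [Set.mem_setOf_eq, and_iff_right_iff_imp]
        intro ha hc
        rw [hc, bridgeHyp_vdeg h1] at ha
        omega
      have e4 : {b : G2.V | b ≠ v2 ∧ 3 < vdeg G2.graph b} = {b : G2.V | 3 < vdeg G2.graph b} := by
        ext b
        simp only [Set.mem_setOf_eq, and_iff_right_iff_imp]
        intro hb hc
        rw [hc, bridgeHyp_vdeg h2] at hb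
        omega
      rw [e3, e4, hh1, hh2]
    have hsum : (∑ v, vdeg G.graph v) + 6 =
        (∑ v, vdeg G1.graph v) + (∑ v, vdeg G2.graph v) := by
      rw [← sum_vdeg_iso e, Fintype.sum_sum_type]
      have e1 : ∑ a : {a : G1.V // a ≠ v1},
          vdeg (BridgeGraph G1.graph G2.graph v1 x1 y1 z1 v2 x2 y2 z2) (Sum.inl a) =
          ∑ a : {a : G1.V // a ≠ v1}, vdeg G1.graph a.1 :=
        Finset.sum_congr rfl fun a _ => vdeg_bridge_inl h1 h2 a
      have e2 : ∑ b : {b : G2.V // b ≠ v2},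
          vdeg (BridgeGraph G1.graph G2.graph v1 x1 y1 z1 v2 x2 y2 z2) (Sum.inr b) =
          ∑ b : {b : G2.V // b ≠ v2}, vdeg G2.graph b.1 :=
        Finset.sum_congr rfl fun b _ => vdeg_bridge_inr h1 h2 b
      have e3 := sum_subtype_ne v1 (vdeg G1.graph)
      have e4 := sum_subtype_ne v2 (vdeg G2.graph)
      rw [bridgeHyp_vdeg h1] at e3
      rw [bridgeHyp_vdeg h2] at e4
      rw [e1, e2]
      omega
    refine ⟨by omega, forall_vdeg_iso e.symm hdB, hhigh, by omega, by omega⟩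
  | edgeJoin G G' j t p s hc' hEJ ih =>
    obtain ⟨hc'', hd, hh, hs, hp⟩ := ih
    obtain ⟨hreg, hconn, a, b, c, d, hab, hcd, hne, ⟨e⟩⟩ := hEJ
    have hp0 : p = 0 := by
      rw [← hh]
      have : {v | 3 < vdeg G'.graph v} = ∅ := by
        ext v; simp [hreg v]
      rw [this, Set.ncard_empty]
    have hs0 : s = 0 := by
      rw [Finset.sum_congr rfl (fun v _ => hreg v), Finset.sum_const, Finset.card_univ,
        smul_eq_mul] at hs
      omega
    have hdE : ∀ q, vdeg (EdgeJoinGraph G'.graph a b c d) q = 3 := by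
      rintro (u | i)
      · exact vdeg_ej_inl hreg hab hcd hne u
      · exact vdeg_ej_inr hab hcd i
    have hcard : Fintype.card G.V = Fintype.card G'.V + 2 := by
      rw [card_iso e, Fintype.card_sum, Fintype.card_bool]
    have hdeg : ∀ v, vdeg G.graph v = 3 := by
      intro v
      have h1 := vdeg_iso e v
      rw [hdE] at h1
      exact h1.symm
    refine ⟨by omega, fun v => (hdeg v).ge, ?_, ?_, by omega⟩
    · have : {v | 3 < vdeg G.graph v} = ∅ := by
        ext v; simp [hdeg v]
      rw [this, Set.ncard_empty, hp0]
    · rw [Finset.sum_congr rfl (fun v _ => hdeg v), Finset.sum_const, Finset.card_univ,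
        smul_eq_mul, hp0, hs0]
      omega
  | primarySpoke G G' j t p s hc' hPS ih =>
    classical
    obtain ⟨hc'', hd, hh, hs, hp⟩ := ih
    obtain ⟨v, w, x, hSH, hx3, ⟨e⟩⟩ := hPS
    have hreg : ∀ z, vdeg G'.graph z = 3 := by
      intro z
      by_cases hz : z = x
      · rw [hz]; exact hx3
      · exact hSH.2.2.2.2 z hz
    have hp0 : p = 0 := by
      rw [← hh]
      have : {v | 3 < vdeg G'.graph v} = ∅ := by
        ext z; simp [hreg z]
      rw [this, Set.ncard_empty]
    have hs0 : s = 0 := by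
      rw [Finset.sum_congr rfl (fun v _ => hreg v), Finset.sum_const, Finset.card_univ,
        smul_eq_mul] at hs
      omega
    have hcard : Fintype.card G.V = Fintype.card G'.V + 1 := by
      rw [card_iso e, Fintype.card_sum, Fintype.card_unit]
    have hdS : ∀ q, 3 ≤ vdeg (SpokeGraph G'.graph v w x) q := by
      rintro (z | u)
      · by_cases hz : z = x
        · rw [hz, vdeg_spoke_inl_x hSH]; omega
        · rw [vdeg_spoke_inl hSH z hz]; exact hd z
      · rw [vdeg_spoke_inr hSH]
    have hhigh : {q | 3 < vdeg G.graph q}.ncard = 1 := by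
      rw [← ncard_high_iso e, ncard_sum]
      have e1 : {z : G'.V | 3 < vdeg (SpokeGraph G'.graph v w x) (Sum.inl z)} = {x} := by
        ext z
        simp only [Set.mem_setOf_eq, Set.mem_singleton_iff]
        constructor
        · intro hz
          by_contra hzx
          rw [vdeg_spoke_inl hSH z hzx, hreg z] at hz
          omega
        · rintro rfl
          rw [vdeg_spoke_inl_x hSH]
          have := hd z
          omega
      have e2 : {u : Unit | 3 < vdeg (SpokeGraph G'.graph v w x) (Sum.inr u)} = ∅ := by
        ext u; simp [vdeg_spoke_inr hSH]
      rw [e1, e2, Set.ncard_singleton, Set.ncard_empty]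
    have hsum : (∑ q, vdeg G.graph q) = (∑ z, vdeg G'.graph z) + 4 := by
      classical
      rw [← sum_vdeg_iso e, Fintype.sum_sum_type]
      have e0 : ∑ u : Unit, vdeg (SpokeGraph G'.graph v w x) (Sum.inr u) = 3 := by
        rw [Fintype.sum_unique, vdeg_spoke_inr hSH]
      have e1 : ∑ z : G'.V, vdeg (SpokeGraph G'.graph v w x) (Sum.inl z) =
          (∑ z, vdeg G'.graph z) + 1 := by
        rw [← Finset.sum_erase_add _ _ (Finset.mem_univ x),
          ← Finset.sum_erase_add Finset.univ (vdeg G'.graph) (Finset.mem_univ x)]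
        have e2 : ∑ z ∈ Finset.univ.erase x, vdeg (SpokeGraph G'.graph v w x) (Sum.inl z) =
            ∑ z ∈ Finset.univ.erase x, vdeg G'.graph z :=
          Finset.sum_congr rfl fun z hz =>
            vdeg_spoke_inl hSH z (Finset.mem_erase.mp hz).1
        rw [e2, vdeg_spoke_inl_x hSH]
        omega
      rw [e0, e1]
    refine ⟨by omega, forall_vdeg_iso e.symm hdS, by omega, by omega, by omega⟩
  | secondarySpoke G G' j t p s hc' hSS ih =>
    classical
    obtain ⟨hc'', hd, hh, hs, hp⟩ := ih
    obtain ⟨v, w, x, hSH, hx3, ⟨e⟩⟩ := hSS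
    have hp1 : p = 1 := by
      rw [← hh]
      have : {z | 3 < vdeg G'.graph z} = {x} := by
        ext z
        simp only [Set.mem_setOf_eq, Set.mem_singleton_iff]
        constructor
        · intro hz
          by_contra hzx
          rw [hSH.2.2.2.2 z hzx] at hz
          omega
        · rintro rfl; exact hx3
      rw [this, Set.ncard_singleton]
    have hcard : Fintype.card G.V = Fintype.card G'.V + 1 := by
      rw [card_iso e, Fintype.card_sum, Fintype.card_unit]
    have hdS : ∀ q, 3 ≤ vdeg (SpokeGraph G'.graph v w x) q := by
      rintro (z | u)
      · by_cases hz : z = x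
        · rw [hz, vdeg_spoke_inl_x hSH]; omega
        · rw [vdeg_spoke_inl hSH z hz]; exact hd z
      · rw [vdeg_spoke_inr hSH]
    have hhigh : {q | 3 < vdeg G.graph q}.ncard = 1 := by
      rw [← ncard_high_iso e, ncard_sum]
      have e1 : {z : G'.V | 3 < vdeg (SpokeGraph G'.graph v w x) (Sum.inl z)} = {x} := by
        ext z
        simp only [Set.mem_setOf_eq, Set.mem_singleton_iff]
        constructor
        · intro hz
          by_contra hzx
          rw [vdeg_spoke_inl hSH z hzx, hSH.2.2.2.2 z hzx] at hz
          omega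
        · rintro rfl
          rw [vdeg_spoke_inl_x hSH]
          omega
      have e2 : {u : Unit | 3 < vdeg (SpokeGraph G'.graph v w x) (Sum.inr u)} = ∅ := by
        ext u; simp [vdeg_spoke_inr hSH]
      rw [e1, e2, Set.ncard_singleton, Set.ncard_empty]
    have hsum : (∑ q, vdeg G.graph q) = (∑ z, vdeg G'.graph z) + 4 := by
      classical
      rw [← sum_vdeg_iso e, Fintype.sum_sum_type]
      have e0 : ∑ u : Unit, vdeg (SpokeGraph G'.graph v w x) (Sum.inr u) = 3 := by
        rw [Fintype.sum_unique, vdeg_spoke_inr hSH]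
      have e1 : ∑ z : G'.V, vdeg (SpokeGraph G'.graph v w x) (Sum.inl z) =
          (∑ z, vdeg G'.graph z) + 1 := by
        rw [← Finset.sum_erase_add _ _ (Finset.mem_univ x),
          ← Finset.sum_erase_add Finset.univ (vdeg G'.graph) (Finset.mem_univ x)]
        have e2 : ∑ z ∈ Finset.univ.erase x, vdeg (SpokeGraph G'.graph v w x) (Sum.inl z) =
            ∑ z ∈ Finset.univ.erase x, vdeg G'.graph z :=
          Finset.sum_congr rfl fun z hz =>
            vdeg_spoke_inl hSH z (Finset.mem_erase.mp hz).1
        rw [e2, vdeg_spoke_inl_x hSH]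
        omega
      rw [e0, e1]
    refine ⟨by omega, forall_vdeg_iso e.symm hdS, by omega, by omega, by omega⟩
/-- **Theorem 19.** Given an extremal uniformly 3-connected graph on `n = 3k + ℓ ≥ 5`
vertices, `k ≥ 2`, `ℓ ∈ {−1, 0, 1}`, constructed with `j` bridge operations, `t` edge joins,
`p` primary and `s` secondary spoke operations: (1) `p = k − 1`; (2) if `ℓ = −1` then
`j = k − 2`, `t = s = 0`; (3) if `ℓ = 0` then `j = k − 2`, `t = 0`, `s = 1`; (4) if `ℓ = 1`
then `j = k − 1`, `t = s = 0`, or `j = k − 2`, `t = 1`, `s = 0`, or `j = k − 2`, `t = 0`,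
`s = 2`. -/

theorem numbers_of_extremal (G : FinGraph) (k : ℕ) (hk : 2 ≤ k) (l : ℤ)
    (hl : l = -1 ∨ l = 0 ∨ l = 1) (hn : (Fintype.card G.V : ℤ) = 3 * k + l)
    (h5 : 5 ≤ Fintype.card G.V) (hE : ExtremalU3 G.graph)
    (j t p s : ℕ) (hc : Constructed G j t p s) :
    (p : ℤ) = k - 1 ∧
    (l = -1 → (j : ℤ) = k - 2 ∧ t = 0 ∧ s = 0) ∧
    (l = 0 → (j : ℤ) = k - 2 ∧ t = 0 ∧ s = 1) ∧
    (l = 1 → ((j : ℤ) = k - 1 ∧ t = 0 ∧ s = 0) ∨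
             ((j : ℤ) = k - 2 ∧ t = 1 ∧ s = 0) ∨
             ((j : ℤ) = k - 2 ∧ t = 0 ∧ s = 2)) := by
  obtain ⟨hcard, hdeg, hhigh, hsum, hpj⟩ := constructed_inv hc
  have hex : ∃ v : G.V, vdeg G.graph v = 3 := by
    by_contra hcon
    push_neg at hcon
    have huniv : {v | 3 < vdeg G.graph v} = Set.univ := by
      ext v
      simp only [Set.mem_setOf_eq, Set.mem_univ, iff_true]
      exact lt_of_le_of_ne (hdeg v) (fun hc' => hcon v hc'.symm)
    rw [huniv, Set.ncard_univ, Nat.card_eq_fintype_card] at hhigh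
    omega
  obtain ⟨v0, hv0⟩ := hex
  have hmin : minDeg G.graph = 3 := by
    apply le_antisymm
    · exact Nat.sInf_le ⟨v0, hv0⟩
    · exact le_csInf ⟨3, ⟨v0, hv0⟩⟩ (by rintro b ⟨v, rfl⟩; exact hdeg v)
  have hnu : nu G.graph + p = Fintype.card G.V := by
    have hset : {v | vdeg G.graph v = minDeg G.graph} = {v | 3 < vdeg G.graph v}ᶜ := by
      ext v
      simp only [hmin, Set.mem_setOf_eq, Set.mem_compl_iff, not_lt]
      constructor
      · intro h; omega
      · intro h; exact le_antisymm h (hdeg v)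
    have hc2 := Set.ncard_add_ncard_compl {v | 3 < vdeg G.graph v}
    rw [Nat.card_eq_fintype_card] at hc2
    rw [nu, hset]
    omega
  have hnuz := hE.2
  have hQ : (Fintype.card G.V : ℚ) = ((3 * (k : ℤ) + l : ℤ) : ℚ) := by
    exact_mod_cast congrArg (fun z : ℤ => (z : ℚ)) hn
  have h3 : (0 : ℚ) < 3 := by norm_num
  rcases hl with rfl | rfl | rfl
  · have hq : (2 * (Fintype.card G.V : ℚ) + 2) / 3 = ((2 * (k : ℤ) : ℤ) : ℚ) := by
      rw [hQ]; push_cast; ring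
    rw [hq, Int.ceil_intCast] at hnuz
    refine ⟨by omega, by omega, by omega, by omega⟩
  · have hceil : ⌈(2 * (Fintype.card G.V : ℚ) + 2) / 3⌉ = 2 * (k : ℤ) + 1 := by
      rw [Int.ceil_eq_iff]
      constructor
      · rw [lt_div_iff₀ h3, hQ]; push_cast; ring_nf; linarith
      · rw [div_le_iff₀ h3, hQ]; push_cast; ring_nf; linarith
    rw [hceil] at hnuz
    refine ⟨by omega, by omega, by omega, by omega⟩
  · have hceil : ⌈(2 * (Fintype.card G.V : ℚ) + 2) / 3⌉ = 2 * (k : ℤ) + 2 := by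
      rw [Int.ceil_eq_iff]
      constructor
      · rw [lt_div_iff₀ h3, hQ]; push_cast; ring_nf; linarith
      · rw [div_le_iff₀ h3, hQ]; push_cast; ring_nf; linarith
    rw [hceil] at hnuz
    refine ⟨by omega, by omega, by omega, by omega⟩
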